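/- Identity Inclusion: let e be the environment mapping every type variable to the relation =βη. Then (1) for every ∀⁺ type P, ⟦P⟧_e ⊆ =βη, and (2) for every ∀⁻ type N, =βη ⊆ ⟦N⟧_e. -/

import Mathlib

namespace RelTT

/-- Untyped lambda terms (de Bruijn indices). -/
inductive Term : Type
  | var : ℕ → Term
  | lam : Term → Term
  | app : Term → Term → Term

namespace Term

/-- Lift free variables ≥ c by one. -/
def lift : Term → ℕ → Term
  | var k, c => if k < c then var k else var (k+1)
  | lam t, c => lam (lift t (c+1))
  | app t u, c => app (lift t c) (lift u c)

/-- Capture-avoiding substitution of `s` for variable `n`. -/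
def subst : Term → ℕ → Term → Term
  | var k, n, s => if k = n then s else if n < k then var (k-1) else var k
  | lam t, n, s => lam (subst t (n+1) (lift s 0))
  | app t u, n, s => app (subst t n s) (subst u n s)

end Term

/-- βη-equivalence of untyped lambda terms. -/
inductive Beq : Term → Term → Prop
  | beta (t u : Term) : Beq (Term.app (Term.lam t) u) (Term.subst t 0 u)
  | eta (t : Term) : Beq (Term.lam (Term.app (Term.lift t 0) (Term.var 0))) t
  | refl (t : Term) : Beq t t
  | symm {t u} : Beq t u → Beq u t
  | trans {t u v} : Beq t u → Beq u v → Beq t v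
  | appCongr {t t' u u'} : Beq t t' → Beq u u' → Beq (Term.app t u) (Term.app t' u')
  | lamCongr {t t'} : Beq t t' → Beq (Term.lam t) (Term.lam t')

/-- Binary relations on terms. -/
abbrev Rel := Term → Term → Prop

/-- A relation is βη-closed iff it respects βη-equivalence on both sides. -/
def BetaEtaClosed (r : Rel) : Prop :=
  ∀ t₁ t₂ t₁' t₂', r t₁ t₂ → Beq t₁' t₁ → Beq t₂' t₂ → r t₁' t₂'

/-- Relational types of RelTT (type variables are de Bruijn indices). -/
inductive Ty : Type
  | var : ℕ → Ty
  | arrow : Ty → Ty → Ty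
  | all : Ty → Ty
  | conv : Ty → Ty
  | comp : Ty → Ty → Ty
  | prom : Term → Ty

/-- Environments map type variables to relations. -/
abbrev Env := ℕ → Rel

def Env.cons (r : Rel) (γ : Env) : Env
  | 0 => r
  | n+1 => γ n

/-- The relational semantics of types. -/
def interp : Ty → Env → Rel
  | Ty.var n, γ => γ n
  | Ty.arrow R R', γ => fun t t' =>
      ∀ a a', interp R γ a a' → interp R' γ (Term.app t a) (Term.app t' a')
  | Ty.all R, γ => fun t t' =>
      ∀ r : Rel, BetaEtaClosed r → interp R (Env.cons r γ) t t'
  | Ty.conv R, γ => fun t t' => interp R γ t' t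
  | Ty.comp R R', γ => fun t t' => ∃ u, interp R γ t u ∧ interp R' γ u t'
  | Ty.prom tm, γ => fun t t' => Beq (Term.app tm t) t'

/-- All relations in the environment are βη-closed. -/
def EnvClosed (γ : Env) : Prop := ∀ n, BetaEtaClosed (γ n)

def I : Term := Term.lam (Term.var 0)
def K : Term := Term.lam (Term.lam (Term.var 1))

/-- Polarities. -/
inductive Pol | pos | neg

/-- The opposite polarity. -/
def Pol.flip : Pol → Pol
  | .pos => .neg
  | .neg => .pos

/-- The ∀ᵖ classes of types: ∀⁺ (p = pos) and ∀⁻ (p = neg). -/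
inductive Foral : Pol → Ty → Prop
  | var (p n) : Foral p (Ty.var n)
  | arrow {p R R'} : Foral p.flip R → Foral p R' → Foral p (Ty.arrow R R')
  | all {R} : Foral .pos R → Foral .pos (Ty.all R)
  | conv {p R} : Foral p R → Foral p (Ty.conv R)
  | prom (p) {t} : Beq t I → Foral p (Ty.prom t)

/-- The environment mapping every type variable to βη-equivalence. -/
def e : Env := fun _ => Beq

namespace Term

theorem lift_lift (t : Term) : ∀ d c, d ≤ c →
    lift (lift t d) (c+1) = lift (lift t c) d := by
  induction t with
  | var k =>
    intro d c h
    simp only [lift]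
    split_ifs <;> (try simp only [lift]) <;> (try split_ifs) <;>
      first | rfl | omega | (congr 1; omega)
  | lam t ih =>
    intro d c h
    simp only [lift, ih (d+1) (c+1) (by omega)]
  | app a b iha ihb =>
    intro d c h
    simp only [lift, iha d c h, ihb d c h]

theorem lift_subst_ge (t : Term) : ∀ n c s, n ≤ c →
    lift (subst t n s) c = subst (lift t (c+1)) n (lift s c) := by
  induction t with
  | var k =>
    intro n c s h
    simp only [lift, subst]
    split_ifs <;> (try simp only [lift, subst]) <;> (try split_ifs) <;>
      first | rfl | omega | (congr 1; omega)
  | lam t ih =>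
    intro n c s h
    simp only [lift, subst, ih (n+1) (c+1) (lift s 0) (by omega),
      lift_lift s 0 c (by omega)]
  | app a b iha ihb =>
    intro n c s h
    simp only [lift, subst, iha n c s h, ihb n c s h]

theorem lift_subst_lt (t : Term) : ∀ n c s, c ≤ n →
    lift (subst t n s) c = subst (lift t c) (n+1) (lift s c) := by
  induction t with
  | var k =>
    intro n c s h
    simp only [lift, subst]
    split_ifs <;> (try simp only [lift, subst]) <;> (try split_ifs) <;>
      first | rfl | omega | (congr 1; omega)
  | lam t ih =>
    intro n c s h
    simp only [lift, subst, ih (n+1) (c+1) (lift s 0) (by omega),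
      lift_lift s 0 c (by omega)]
  | app a b iha ihb =>
    intro n c s h
    simp only [lift, subst, iha n c s h, ihb n c s h]

theorem subst_lift_cancel (t : Term) : ∀ c s, subst (lift t c) c s = t := by
  induction t with
  | var k =>
    intro c s
    simp only [lift]
    split_ifs <;> (try simp only [subst]) <;> (try split_ifs) <;>
      first | rfl | omega | (congr 1; omega)
  | lam t ih =>
    intro c s
    simp only [lift, subst, ih (c+1) (lift s 0)]
  | app a b iha ihb =>
    intro c s
    simp only [lift, subst, iha, ihb]

theorem subst_subst (t : Term) : ∀ m n u s, m ≤ n →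
    subst (subst t m u) n s = subst (subst t (n+1) (lift s m)) m (subst u n s) := by
  induction t with
  | var k =>
    intro m n u s h
    simp only [subst]
    split_ifs <;> (try simp only [subst]) <;> (try split_ifs) <;>
      first
      | rfl | omega | (congr 1; omega)
      | (exact (subst_lift_cancel s m (subst u n s)).symm)
  | lam t ih =>
    intro m n u s h
    simp only [subst, ih (m+1) (n+1) (lift u 0) (lift s 0) (by omega),
      lift_lift s 0 m (by omega),
      lift_subst_lt u n 0 s (by omega)]
  | app a b iha ihb =>
    intro m n u s h
    simp only [subst, iha m n u s h, ihb m n u s h]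

theorem exists_fresh (t : Term) : ∃ n, ∀ c, n ≤ c → lift t c = t := by
  induction t with
  | var k =>
    exact ⟨k+1, fun c hc => by simp only [lift, if_pos (by omega : k < c)]⟩
  | lam t ih =>
    obtain ⟨n, hn⟩ := ih
    exact ⟨n, fun c hc => by simp only [lift, hn (c+1) (by omega)]⟩
  | app a b iha ihb =>
    obtain ⟨n, hn⟩ := iha
    obtain ⟨m, hm⟩ := ihb
    exact ⟨max n m, fun c hc => by
      simp only [lift, hn c (by omega), hm c (by omega)]⟩

theorem subst_of_lift_eq (t : Term) : ∀ c s, lift t c = t → subst t c s = t := by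
  induction t with
  | var k =>
    intro c s h
    simp only [lift] at h
    split_ifs at h with h1
    · simp only [subst, if_neg (by omega : ¬ k = c), if_neg (by omega : ¬ c < k)]
    · exact absurd (var.inj h) (by omega)
  | lam t ih =>
    intro c s h
    simp only [lift] at h
    simp only [subst, ih (c+1) (lift s 0) (lam.inj h)]
  | app a b iha ihb =>
    intro c s h
    simp only [lift] at h
    obtain ⟨h1, h2⟩ := app.inj h
    simp only [subst, iha c s h1, ihb c s h2]

end Term
section Aux

open Term

theorem Beq.lift_closed {t u : Term} (h : Beq t u) : ∀ c, Beq (lift t c) (lift u c) := by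
  induction h with
  | beta b a =>
    intro c
    have := Beq.beta (lift b (c+1)) (lift a c)
    rw [← lift_subst_ge b 0 c a (by omega)] at this
    exact this
  | eta b =>
    intro c
    have : lift (lam (app (lift b 0) (var 0))) c
        = lam (app (lift (lift b c) 0) (var 0)) := by
      simp only [lift, if_pos (by omega : 0 < c + 1), lift_lift b 0 c (by omega)]
    rw [this]
    exact Beq.eta (lift b c)
  | refl t => exact fun c => Beq.refl _
  | symm _ ih => exact fun c => (ih c).symm
  | trans _ _ ih1 ih2 => exact fun c => (ih1 c).trans (ih2 c)
  | appCongr _ _ ih1 ih2 => exact fun c => Beq.appCongr (ih1 c) (ih2 c)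
  | lamCongr _ ih => exact fun c => Beq.lamCongr (ih (c+1))

theorem Beq.subst_closed {t u : Term} (h : Beq t u) :
    ∀ n s, Beq (subst t n s) (subst u n s) := by
  induction h with
  | beta b a =>
    intro n s
    have := Beq.beta (subst b (n+1) (lift s 0)) (subst a n s)
    rw [← subst_subst b 0 n a s (by omega)] at this
    exact this
  | eta b =>
    intro n s
    have : subst (lam (app (lift b 0) (var 0))) n s
        = lam (app (lift (subst b n s) 0) (var 0)) := by
      simp only [subst, lift_subst_lt b n 0 s (by omega),
        if_neg (by omega : ¬ (0 : ℕ) = n + 1), if_neg (by omega : ¬ n + 1 < 0)]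
    rw [this]
    exact Beq.eta (subst b n s)
  | refl t => exact fun n s => Beq.refl _
  | symm _ ih => exact fun n s => (ih n s).symm
  | trans _ _ ih1 ih2 => exact fun n s => (ih1 n s).trans (ih2 n s)
  | appCongr _ _ ih1 ih2 => exact fun n s => Beq.appCongr (ih1 n s) (ih2 n s)
  | lamCongr _ ih => exact fun n s => Beq.lamCongr (ih (n+1) (lift s 0))

/-- Zeta: if `t a =βη t' a` for every `a`, then `t =βη t'`. -/
theorem zeta {t t' : Term} (h : ∀ a, Beq (Term.app t a) (Term.app t' a)) :
    Beq t t' := by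
  obtain ⟨n, hn⟩ := exists_fresh t
  obtain ⟨m, hm⟩ := exists_fresh t'
  set N := max n m with hN
  have ht : lift t N = t := hn N (by omega)
  have ht' : lift t' N = t' := hm N (by omega)
  -- lift the instance at var N
  have h1 : Beq (app (lift t 0) (var (N+1))) (app (lift t' 0) (var (N+1))) := by
    have := (h (var N)).lift_closed 0
    simpa only [lift, if_neg (by omega : ¬ N < 0)] using this
  -- substitute var 0 for N+1
  have key : ∀ u : Term, lift u N = u → subst (lift u 0) (N+1) (var 0) = lift u 0 := by
    intro u hu
    apply subst_of_lift_eq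
    calc lift (lift u 0) (N+1) = lift (lift u N) 0 := lift_lift u 0 N (by omega)
      _ = lift u 0 := by rw [hu]
  have h2 := h1.subst_closed (N+1) (var 0)
  simp only [subst, if_pos rfl, key t ht, key t' ht'] at h2
  -- h2 : Beq (app (lift t 0) (var 0)) (app (lift t' 0) (var 0))
  exact ((Beq.eta t).symm.trans (Beq.lamCongr h2)).trans (Beq.eta t')

theorem beq_closed : BetaEtaClosed Beq :=
  fun _ _ _ _ h h1 h2 => h1.trans (h.trans h2.symm)

theorem cons_beq : Env.cons Beq e = e := by
  funext n
  cases n <;> rfl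

theorem app_I (t : Term) : Beq (Term.app I t) t := by
  have := Beq.beta (Term.var 0) t
  simpa only [Term.subst, if_pos rfl, ↓reduceIte, I] using this

end Aux

theorem main_lemma : ∀ p T, Foral p T →
    match p with
    | .pos => ∀ t t', interp T e t t' → Beq t t'
    | .neg => ∀ t t', Beq t t' → interp T e t t' := by
  intro p T h
  induction h with
  | var p n =>
    cases p with
    | pos => exact fun t t' h => h
    | neg => exact fun t t' h => h
  | @arrow p R R' _ _ ihR ihR' =>
    cases p with
    | pos =>
      intro t t' h
      refine zeta fun a => ?_
      exact ihR' (Term.app t a) (Term.app t' a) (h a a (ihR a a (Beq.refl a)))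
    | neg =>
      intro t t' h a a' ha
      exact ihR' _ _ (Beq.appCongr h (ihR a a' ha))
  | @all R _ ih =>
    intro t t' h
    have := h Beq beq_closed
    rw [cons_beq] at this
    exact ih t t' this
  | @conv p R _ ih =>
    cases p with
    | pos => exact fun t t' h => (ih t' t h).symm
    | neg => exact fun t t' h => ih t' t h.symm
  | @prom p tm htm =>
    have base : ∀ t, Beq (Term.app tm t) t := fun t =>
      (Beq.appCongr htm (Beq.refl t)).trans (app_I t)
    cases p with
    | pos => exact fun t t' h => (base t).symm.trans h
    | neg => exact fun t t' h => (base t).trans h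

theorem identity_inclusion' :
    (∀ P, Foral .pos P → ∀ t t', interp P e t t' → Beq t t') ∧
    (∀ N, Foral .neg N → ∀ t t', Beq t t' → interp N e t t') :=
  ⟨fun P h => main_lemma .pos P h, fun N h => main_lemma .neg N h⟩
/-- Identity Inclusion: (1) for every ∀⁺ type P, ⟦P⟧_e ⊆ =βη;
(2) for every ∀⁻ type N, =βη ⊆ ⟦N⟧_e. -/
theorem identity_inclusion :
    (∀ P, Foral .pos P → ∀ t t', interp P e t t' → Beq t t') ∧
    (∀ N, Foral .neg N → ∀ t t', Beq t t' → interp N e t t') := by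
  exact identity_inclusion'

end RelTT
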